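/- Under the stated hypotheses, the mixture density ρ satisfies ∫_D g(y)²/ρ(y) dμ(y) ≤ ∫_D g(y)² dμ(y). (Theorem 4.2, main inequality.) -/

import Mathlib

open MeasureTheory

/-- Theorem 4.2 (main inequality): for the mixture density
`ρ = (1 - τ) + τ · ρ̃` with `ρ̃ = g² / ∫ g² dμ`, one has
`∫ g²/ρ dμ ≤ ∫ g² dμ`. -/
theorem mixture_density_integral_le
    {D : Type*} [MeasurableSpace D] (μ : Measure D) [IsProbabilityMeasure μ]
    (g τ ρt ρ : D → ℝ) (I : ℝ)
    (hg : Measurable g) (hg0 : ∀ y, 0 ≤ g y)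
    (hI : I = ∫ y, (g y) ^ 2 ∂μ) (hIpos : 0 < I)
    (hg2 : Integrable (fun y => (g y) ^ 2) μ)
    (hτ : Measurable τ) (hτ01 : ∀ y, τ y ∈ Set.Icc (0 : ℝ) 1)
    (hρt : ρt = fun y => (g y) ^ 2 / I)
    (hρ : ρ = fun y => (1 - τ y) + τ y * ρt y)
    (hρ1 : ∫ y, ρ y ∂μ = 1)
    (hρpos : ∀ᵐ y ∂μ, 0 < ρ y) :
    ∫ y, (g y) ^ 2 / ρ y ∂μ ≤ ∫ y, (g y) ^ 2 ∂μ := by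
  subst hρt hρ
  -- integrability facts
  have hτint : Integrable τ μ := by
    refine (integrable_const (1 : ℝ)).mono' hτ.aestronglyMeasurable ?_
    filter_upwards with y
    rw [Real.norm_eq_abs, abs_le]
    exact ⟨by linarith [(hτ01 y).1], (hτ01 y).2⟩
  have hτg2 : Integrable (fun y => τ y * (g y) ^ 2) μ := by
    refine hg2.bdd_mul hτ.aestronglyMeasurable (c := 1) (ae_of_all _ fun y => ?_)
    rw [Real.norm_eq_abs, abs_le]
    exact ⟨by linarith [(hτ01 y).1], (hτ01 y).2⟩
  have hτI : Integrable (fun y => τ y * I) μ := hτint.mul_const I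
  have hF : Integrable (fun y => (1 - τ y) * (g y) ^ 2 + τ y * I) μ := by
    have : Integrable (fun y => (g y) ^ 2 - τ y * (g y) ^ 2) μ := hg2.sub hτg2
    exact (this.congr (by filter_upwards with y; ring)).add hτI
  -- pointwise bound
  have key : ∀ᵐ y ∂μ, (g y) ^ 2 / ((1 - τ y) + τ y * ((g y) ^ 2 / I)) ≤
      (1 - τ y) * (g y) ^ 2 + τ y * I := by
    filter_upwards [hρpos] with y hy
    rw [div_le_iff₀ hy]
    set x := (g y) ^ 2 with hx
    set t := τ y with ht
    have h0 : (0 : ℝ) ≤ t := (hτ01 y).1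
    have h1 : t ≤ 1 := (hτ01 y).2
    have e : ((1 - t) + t * (x / I)) * I = (1 - t) * I + t * x := by
      field_simp
    rw [← mul_le_mul_iff_of_pos_right hIpos, mul_assoc, e]
    nlinarith [mul_nonneg (mul_nonneg h0 (sub_nonneg.2 h1)) (sq_nonneg (x - I))]
  -- integrability of the integrand
  have hmeas : AEStronglyMeasurable
      (fun y => (g y) ^ 2 / ((1 - τ y) + τ y * ((g y) ^ 2 / I))) μ := by
    apply Measurable.aestronglyMeasurable
    exact ((hg.pow_const 2).div (((measurable_const.sub hτ).add
      (hτ.mul ((hg.pow_const 2).div_const I)))))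
  have hint : Integrable
      (fun y => (g y) ^ 2 / ((1 - τ y) + τ y * ((g y) ^ 2 / I))) μ := by
    refine hF.mono' hmeas ?_
    filter_upwards [key, hρpos] with y hk hy
    rw [Real.norm_eq_abs, abs_of_nonneg (div_nonneg (sq_nonneg _) hy.le)]
    exact hk
  -- compute ∫ F = I using ∫ ρ = 1
  have hρsplit : ∫ y, ((1 - τ y) + τ y * ((g y) ^ 2 / I)) ∂μ =
      (1 - ∫ y, τ y ∂μ) + (∫ y, τ y * (g y) ^ 2 ∂μ) / I := by
    have h1 : Integrable (fun y => 1 - τ y) μ := (integrable_const 1).sub hτint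
    have h2 : Integrable (fun y => τ y * ((g y) ^ 2 / I)) μ :=
      (hτg2.div_const I).congr (by filter_upwards with y; ring)
    rw [integral_add h1 h2, integral_sub (integrable_const 1) hτint,
      integral_const]
    simp only [measure_univ, probReal_univ, ENNReal.toReal_one, smul_eq_mul, one_mul]
    congr 1
    rw [← integral_div]
    exact integral_congr_ae (by filter_upwards with y; ring)
  have hτg2I : ∫ y, τ y * (g y) ^ 2 ∂μ = I * ∫ y, τ y ∂μ := by
    rw [hρsplit] at hρ1
    have := hρ1
    field_simp at this ⊢
    linarith
  have hFint : ∫ y, ((1 - τ y) * (g y) ^ 2 + τ y * I) ∂μ = I := by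
    have e1 : Integrable (fun y => (g y) ^ 2 - τ y * (g y) ^ 2) μ := hg2.sub hτg2
    rw [integral_congr_ae (show (fun y => (1 - τ y) * (g y) ^ 2 + τ y * I) =ᵐ[μ]
      (fun y => ((g y) ^ 2 - τ y * (g y) ^ 2) + τ y * I) from by
        filter_upwards with y; ring),
      integral_add e1 hτI, integral_sub hg2 hτg2, integral_mul_const, hτg2I, ← hI]
    ring
  calc ∫ y, (g y) ^ 2 / ((1 - τ y) + τ y * ((g y) ^ 2 / I)) ∂μ
      ≤ ∫ y, ((1 - τ y) * (g y) ^ 2 + τ y * I) ∂μ := integral_mono_ae hint hF key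
    _ = I := hFint
    _ = ∫ y, (g y) ^ 2 ∂μ := hI
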